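/- Let (M_n)_{n≥1} be a sequence of d×d doubly-stochastic real matrices. Assume there exists a constant γ > 0 such that for every n ≥ 1 and every i in {1,…,d}, M_n(i,i) ≥ γ. Then the sequence of backward products P_n = M_n⋯M_2M_1 has finite variation (i.e. Σ_n ‖P_{n+1} − P_n‖ < ∞), hence converges to some row-stochastic matrix L; moreover, for every pair of indices i, j such that the i-th and j-th rows of L are different, the series Σ_n M_n(i,j) and Σ_n M_n(j,i) converge. -/

import Mathlib

open Filter Topology

lemma key_vec {d : ℕ} (γ : ℝ) (M : Matrix (Fin d) (Fin d) ℝ)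
    (hnn : ∀ i j, 0 ≤ M i j) (hrow : ∀ i, ∑ j, M i j = 1)
    (hcol : ∀ j, ∑ i, M i j = 1) (hdiag : ∀ i, γ ≤ M i i)
    (x : Fin d → ℝ) :
    (∑ p, ∑ q, |M.mulVec x p - M.mulVec x q|) +
      γ * ∑ p, ∑ q, (M p q + M q p) * |x p - x q| ≤ ∑ p, ∑ q, |x p - x q| := by
  set y := M.mulVec x with hy
  set T : Fin d → Fin d → ℝ := fun i j => ∑ p, ∑ q, M i p * M j q * |x p - x q| with hT
  have hyi : ∀ i, y i = ∑ p, M i p * x p := by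
    intro i; simp [hy, Matrix.mulVec, dotProduct]
  -- difference formula
  have hdiff : ∀ i j, y i - y j = ∑ p, ∑ q, M i p * M j q * (x p - x q) := by
    intro i j
    have e1 : ∑ p, ∑ q, M i p * M j q * x p = y i := by
      rw [hyi i]
      refine Finset.sum_congr rfl fun p _ => ?_
      have : ∑ q, M i p * M j q * x p = (∑ q, M j q) * (M i p * x p) := by
        rw [Finset.sum_mul]
        exact Finset.sum_congr rfl fun q _ => by ring
      rw [this, hrow j, one_mul]
    have e2 : ∑ p, ∑ q, M i p * M j q * x q = y j := by
      rw [Finset.sum_comm, hyi j]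
      refine Finset.sum_congr rfl fun q _ => ?_
      have : ∑ p, M i p * M j q * x q = (∑ p, M i p) * (M j q * x q) := by
        rw [Finset.sum_mul]
        exact Finset.sum_congr rfl fun p _ => by ring
      rw [this, hrow i, one_mul]
    calc y i - y j = (∑ p, ∑ q, M i p * M j q * x p) - (∑ p, ∑ q, M i p * M j q * x q) := by
          rw [e1, e2]
      _ = ∑ p, ∑ q, M i p * M j q * (x p - x q) := by
          rw [← Finset.sum_sub_distrib]
          refine Finset.sum_congr rfl fun p _ => ?_
          rw [← Finset.sum_sub_distrib]
          exact Finset.sum_congr rfl fun q _ => by ring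
  -- step 1 : |y i - y j| ≤ T i j - (if i = j then T i i else 0)
  have step1 : ∀ i j, |y i - y j| ≤ T i j - (if i = j then T i i else 0) := by
    intro i j
    by_cases h : i = j
    · subst h; simp
    · simp only [h, if_false, sub_zero]
      rw [hdiff i j]
      calc |∑ p, ∑ q, M i p * M j q * (x p - x q)|
          ≤ ∑ p, |∑ q, M i p * M j q * (x p - x q)| := Finset.abs_sum_le_sum_abs _ _
        _ ≤ ∑ p, ∑ q, |M i p * M j q * (x p - x q)| :=
            Finset.sum_le_sum fun p _ => Finset.abs_sum_le_sum_abs _ _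
        _ = T i j := by
            refine Finset.sum_congr rfl fun p _ => Finset.sum_congr rfl fun q _ => ?_
            rw [abs_mul, abs_mul, abs_of_nonneg (hnn i p), abs_of_nonneg (hnn j q)]
  -- step 2 : ∑ i j, T i j = ∑ p q, |x p - x q|
  have step2 : ∑ i, ∑ j, T i j = ∑ p, ∑ q, |x p - x q| := by
    have h1 : ∀ i, ∑ j, T i j = ∑ p, ∑ q, M i p * |x p - x q| := by
      intro i
      simp only [hT]
      rw [Finset.sum_comm]
      refine Finset.sum_congr rfl fun p _ => ?_
      rw [Finset.sum_comm]
      refine Finset.sum_congr rfl fun q _ => ?_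
      have : ∑ j, M i p * M j q * |x p - x q| = (∑ j, M j q) * (M i p * |x p - x q|) := by
        rw [Finset.sum_mul]
        exact Finset.sum_congr rfl fun j _ => by ring
      rw [this, hcol q, one_mul]
    calc ∑ i, ∑ j, T i j = ∑ i, ∑ p, ∑ q, M i p * |x p - x q| :=
          Finset.sum_congr rfl fun i _ => h1 i
      _ = ∑ p, ∑ q, |x p - x q| := by
          rw [Finset.sum_comm]
          refine Finset.sum_congr rfl fun p _ => ?_
          rw [Finset.sum_comm]
          refine Finset.sum_congr rfl fun q _ => ?_
          have : ∑ i, M i p * |x p - x q| = (∑ i, M i p) * |x p - x q| := by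
            rw [Finset.sum_mul]
          rw [this, hcol p, one_mul]
  -- step 3 : γ * ∑ p q, (M p q + M q p) * |x p - x q| ≤ ∑ i, T i i
  have step3 : γ * ∑ p, ∑ q, (M p q + M q p) * |x p - x q| ≤ ∑ i, T i i := by
    have h1 : ∑ i, T i i = ∑ p, ∑ q, (∑ i, M i p * M i q) * |x p - x q| := by
      rw [Finset.sum_comm]
      refine Finset.sum_congr rfl fun p _ => ?_
      rw [Finset.sum_comm]
      refine Finset.sum_congr rfl fun q _ => ?_
      rw [Finset.sum_mul]
    rw [h1, Finset.mul_sum]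
    refine Finset.sum_le_sum fun p _ => ?_
    rw [Finset.mul_sum]
    refine Finset.sum_le_sum fun q _ => ?_
    by_cases hpq : p = q
    · subst hpq; simp
    · have hxg : (0:ℝ) ≤ |x p - x q| := abs_nonneg _
      have hsub : M p p * M p q + M q p * M q q ≤ ∑ i, M i p * M i q := by
        have := Finset.sum_le_sum_of_subset_of_nonneg
          (Finset.subset_univ ({p, q} : Finset (Fin d)))
          (fun i _ _ => mul_nonneg (hnn i p) (hnn i q))
        rwa [Finset.sum_pair hpq] at this
      have hγ1 : γ * (M p q + M q p) ≤ M p p * M p q + M q p * M q q := by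
        have h1 : γ * M p q ≤ M p p * M p q :=
          mul_le_mul_of_nonneg_right (hdiag p) (hnn p q)
        have h2 : γ * M q p ≤ M q p * M q q := by
          rw [mul_comm (M q p)]
          exact mul_le_mul_of_nonneg_right (hdiag q) (hnn q p)
        linarith
      calc γ * ((M p q + M q p) * |x p - x q|)
          = (γ * (M p q + M q p)) * |x p - x q| := by ring
        _ ≤ (M p p * M p q + M q p * M q q) * |x p - x q| :=
            mul_le_mul_of_nonneg_right hγ1 hxg
        _ ≤ (∑ i, M i p * M i q) * |x p - x q| :=
            mul_le_mul_of_nonneg_right hsub hxg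
  -- combine
  have hmain : (∑ i, ∑ j, |y i - y j|) ≤ (∑ i, ∑ j, T i j) - ∑ i, T i i := by
    have := Finset.sum_le_sum (fun i (_ : i ∈ Finset.univ) =>
      Finset.sum_le_sum (fun j (_ : j ∈ Finset.univ) => step1 i j))
    calc (∑ i, ∑ j, |y i - y j|)
        ≤ ∑ i, ∑ j, (T i j - (if i = j then T i i else 0)) := this
      _ = (∑ i, ∑ j, T i j) - ∑ i, ∑ j, (if i = j then T i i else 0) := by
          rw [← Finset.sum_sub_distrib]
          exact Finset.sum_congr rfl fun i _ => by rw [← Finset.sum_sub_distrib]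
      _ = (∑ i, ∑ j, T i j) - ∑ i, T i i := by
          congr 1
          exact Finset.sum_congr rfl fun i _ => by simp
  rw [step2] at hmain
  linarith [step3]

lemma move_vec {d : ℕ} (M : Matrix (Fin d) (Fin d) ℝ)
    (hnn : ∀ i j, 0 ≤ M i j) (hrow : ∀ i, ∑ j, M i j = 1) (x : Fin d → ℝ) :
    ∑ p, |M.mulVec x p - x p| ≤ ∑ p, ∑ q, M p q * |x p - x q| := by
  refine Finset.sum_le_sum fun p _ => ?_
  have h1 : M.mulVec x p - x p = ∑ q, M p q * (x q - x p) := by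
    have hx : x p = ∑ q, M p q * x p := by
      rw [← Finset.sum_mul, hrow p, one_mul]
    calc M.mulVec x p - x p = (∑ q, M p q * x q) - ∑ q, M p q * x p := by
          rw [← hx]; simp [Matrix.mulVec, dotProduct]
      _ = ∑ q, M p q * (x q - x p) := by
          rw [← Finset.sum_sub_distrib]
          exact Finset.sum_congr rfl fun q _ => by ring
  rw [h1]
  calc |∑ q, M p q * (x q - x p)| ≤ ∑ q, |M p q * (x q - x p)| :=
        Finset.abs_sum_le_sum_abs _ _
    _ = ∑ q, M p q * |x p - x q| := by
        refine Finset.sum_congr rfl fun q _ => ?_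
        rw [abs_mul, abs_of_nonneg (hnn p q), abs_sub_comm]

lemma summable_of_telescope (γ : ℝ) (hγ : 0 < γ) (W u : ℕ → ℝ) (hW : ∀ n, 0 ≤ W n)
    (hu : ∀ n, 0 ≤ u n) (h : ∀ n, γ * u n ≤ W n - W (n + 1)) :
    Summable u := by
  refine summable_of_sum_range_le (c := W 0 / γ) hu fun N => ?_
  rw [le_div_iff₀ hγ]
  have h1 : ∑ n ∈ Finset.range N, γ * u n ≤ ∑ n ∈ Finset.range N, (W n - W (n + 1)) :=
    Finset.sum_le_sum fun n _ => h n
  rw [Finset.sum_range_sub' W N] at h1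
  have h2 : γ * ∑ n ∈ Finset.range N, u n = ∑ n ∈ Finset.range N, γ * u n :=
    Finset.mul_sum _ _ _
  have := hW N
  nlinarith [h1, h2]

/-- Backward products: `backProd M 0 = 1` and `backProd M (n+1) = M n * backProd M n`,
so `backProd M n = M (n-1) * ⋯ * M 0` (the sequence `(M k)_{k≥0}` plays the role of
`(M_n)_{n≥1}` in the paper). -/
noncomputable def backProd {d : ℕ} (M : ℕ → Matrix (Fin d) (Fin d) ℝ) :
    ℕ → Matrix (Fin d) (Fin d) ℝ
  | 0 => 1
  | n + 1 => M n * backProd M n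

lemma backProd_nonneg {d : ℕ} (M : ℕ → Matrix (Fin d) (Fin d) ℝ)
    (hnn : ∀ n i j, 0 ≤ M n i j) : ∀ n i j, 0 ≤ backProd M n i j := by
  intro n
  induction n with
  | zero =>
    intro i j
    simp only [backProd, Matrix.one_apply]
    split <;> norm_num
  | succ n ih =>
    intro i j
    simp only [backProd, Matrix.mul_apply]
    exact Finset.sum_nonneg fun k _ => mul_nonneg (hnn n i k) (ih k j)

lemma backProd_rowsum {d : ℕ} (M : ℕ → Matrix (Fin d) (Fin d) ℝ)
    (hrow : ∀ n i, ∑ j, M n i j = 1) : ∀ n i, ∑ j, backProd M n i j = 1 := by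
  intro n
  induction n with
  | zero =>
    intro i
    simp [backProd, Matrix.one_apply]
  | succ n ih =>
    intro i
    simp only [backProd, Matrix.mul_apply]
    rw [Finset.sum_comm]
    calc ∑ k, ∑ j, M n i k * backProd M n k j
        = ∑ k, M n i k * ∑ j, backProd M n k j := by
          exact Finset.sum_congr rfl fun k _ => (Finset.mul_sum _ _ _).symm
      _ = ∑ k, M n i k := by
          refine Finset.sum_congr rfl fun k _ => ?_
          rw [ih k, mul_one]
      _ = 1 := hrow n i

lemma backProd_succ_apply {d : ℕ} (M : ℕ → Matrix (Fin d) (Fin d) ℝ) (n : ℕ)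
    (p c : Fin d) :
    backProd M (n + 1) p c = (M n).mulVec (fun k => backProd M n k c) p := by
  simp [backProd, Matrix.mul_apply, Matrix.mulVec, dotProduct]

/-- For a sequence of `d × d` doubly-stochastic matrices with diagonal
entries bounded below by `γ > 0`, the backward products have finite variation, hence
converge to a row-stochastic matrix `L`; moreover the series `Σ_n M_n(i,j)` and
`Σ_n M_n(j,i)` converge whenever rows `i` and `j` of `L` are different. -/
theorem backProd_finite_variation_of_doubly_stochastic
    (d : ℕ) (M : ℕ → Matrix (Fin d) (Fin d) ℝ) (γ : ℝ)
    (hγ : 0 < γ)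
    (hnonneg : ∀ n i j, 0 ≤ M n i j)
    (hrow : ∀ n i, ∑ j, M n i j = 1)
    (hcol : ∀ n j, ∑ i, M n i j = 1)
    (hdiag : ∀ n i, γ ≤ M n i i) :
    (Summable fun n => ∑ i, ∑ j, |backProd M (n + 1) i j - backProd M n i j|) ∧
    ∃ L : Matrix (Fin d) (Fin d) ℝ,
      (∀ i j, 0 ≤ L i j) ∧ (∀ i, ∑ j, L i j = 1) ∧
      Tendsto (backProd M) atTop (nhds L) ∧
      ∀ i j, L i ≠ L j → Summable (fun n => M n i j) ∧ Summable (fun n => M n j i) := by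
  -- abbreviations (as plain functions, kept beta-expanded)
  have hP := backProd_succ_apply M
  -- the Lyapunov function
  set W : ℕ → ℝ := fun n => ∑ c, ∑ p, ∑ q, |backProd M n p c - backProd M n q c| with hWdef
  set Φ : ℕ → ℝ := fun n => ∑ c, ∑ p, ∑ q,
      (M n p q + M n q p) * |backProd M n p c - backProd M n q c| with hΦdef
  have hWnn : ∀ n, 0 ≤ W n := fun n =>
    Finset.sum_nonneg fun c _ => Finset.sum_nonneg fun p _ =>
      Finset.sum_nonneg fun q _ => abs_nonneg _
  have hΦnn : ∀ n, 0 ≤ Φ n := fun n =>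
    Finset.sum_nonneg fun c _ => Finset.sum_nonneg fun p _ =>
      Finset.sum_nonneg fun q _ => mul_nonneg
        (add_nonneg (hnonneg n p q) (hnonneg n q p)) (abs_nonneg _)
  -- per-column key inequality
  have hkeyc : ∀ (n : ℕ) (c : Fin d),
      (∑ p, ∑ q, |backProd M (n+1) p c - backProd M (n+1) q c|) +
        γ * ∑ p, ∑ q, (M n p q + M n q p) * |backProd M n p c - backProd M n q c| ≤
      ∑ p, ∑ q, |backProd M n p c - backProd M n q c| := by
    intro n c
    have h := key_vec γ (M n) (hnonneg n) (hrow n) (hcol n) (hdiag n)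
      (fun k => backProd M n k c)
    simpa only [← hP n] using h
  have hkey : ∀ n, W (n+1) + γ * Φ n ≤ W n := by
    intro n
    have h := Finset.sum_le_sum (fun c (_ : c ∈ Finset.univ) => hkeyc n c)
    simp only [Finset.sum_add_distrib, ← Finset.mul_sum] at h
    exact h
  -- the variation sequence
  set f : ℕ → ℝ := fun n => ∑ i, ∑ j, |backProd M (n+1) i j - backProd M n i j| with hfdef
  have hfnn : ∀ n, 0 ≤ f n := fun n =>
    Finset.sum_nonneg fun i _ => Finset.sum_nonneg fun j _ => abs_nonneg _
  have hfΦ : ∀ n, f n ≤ Φ n := by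
    intro n
    have h1 : f n = ∑ c, ∑ p, |backProd M (n+1) p c - backProd M n p c| := by
      rw [hfdef]; exact Finset.sum_comm
    rw [h1]
    refine Finset.sum_le_sum fun c _ => ?_
    have h2 := move_vec (M n) (hnonneg n) (hrow n) (fun k => backProd M n k c)
    simp only [← hP n] at h2
    refine le_trans h2 (Finset.sum_le_sum fun p _ => Finset.sum_le_sum fun q _ => ?_)
    exact mul_le_mul_of_nonneg_right
      (le_add_of_nonneg_right (hnonneg n q p)) (abs_nonneg _)
  have hmove : ∀ n, γ * f n ≤ W n - W (n+1) := by
    intro n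
    have h1 : γ * f n ≤ γ * Φ n := mul_le_mul_of_nonneg_left (hfΦ n) hγ.le
    linarith [hkey n]
  have hfsum : Summable f := summable_of_telescope γ hγ W f hWnn hfnn hmove
  refine ⟨hfsum, ?_⟩
  -- entrywise convergence
  have hdsum : ∀ i j, Summable (fun n => backProd M (n+1) i j - backProd M n i j) := by
    intro i j
    refine Summable.of_abs ?_
    refine Summable.of_nonneg_of_le (fun n => abs_nonneg _) (fun n => ?_) hfsum
    calc |backProd M (n+1) i j - backProd M n i j|
        ≤ ∑ j', |backProd M (n+1) i j' - backProd M n i j'| :=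
          Finset.single_le_sum
            (f := fun j' => |backProd M (n+1) i j' - backProd M n i j'|)
            (fun j' _ => abs_nonneg _) (Finset.mem_univ j)
      _ ≤ f n :=
          Finset.single_le_sum
            (f := fun i' => ∑ j', |backProd M (n+1) i' j' - backProd M n i' j'|)
            (fun i' _ => Finset.sum_nonneg fun j' _ => abs_nonneg _) (Finset.mem_univ i)
  have hconv : ∀ i j, ∃ l, Tendsto (fun n => backProd M n i j) atTop (𝓝 l) := by
    intro i j
    have hs := hdsum i j
    have ht := hs.hasSum.tendsto_sum_nat
    have heq : ∀ N : ℕ, ∑ n ∈ Finset.range N, (backProd M (n+1) i j - backProd M n i j)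
        = backProd M N i j - backProd M 0 i j :=
      fun N => Finset.sum_range_sub (fun n => backProd M n i j) N
    refine ⟨(∑' n, (backProd M (n+1) i j - backProd M n i j)) + backProd M 0 i j, ?_⟩
    have ht2 := ht.add_const (backProd M 0 i j)
    have : (fun N => (∑ n ∈ Finset.range N,
        (backProd M (n+1) i j - backProd M n i j)) + backProd M 0 i j)
        = fun N => backProd M N i j := by
      funext N; rw [heq N]; ring
    rwa [this] at ht2
  choose L hL using hconv
  refine ⟨Matrix.of L, ?_, ?_, ?_, ?_⟩
  · intro i j
    exact ge_of_tendsto' (hL i j) fun n => backProd_nonneg M hnonneg n i j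
  · intro i
    have h1 : Tendsto (fun n => ∑ j, backProd M n i j) atTop (𝓝 (∑ j, L i j)) :=
      tendsto_finset_sum _ fun j _ => hL i j
    have h2 : (fun n => ∑ j, backProd M n i j) = fun _ => (1:ℝ) := by
      funext n; exact backProd_rowsum M hrow n i
    rw [h2] at h1
    show ∑ j, L i j = 1
    exact tendsto_nhds_unique h1 tendsto_const_nhds
  · refine tendsto_pi_nhds.mpr ?_
    intro i
    rw [tendsto_pi_nhds]
    intro j
    exact hL i j
  · intro i j hij
    obtain ⟨c0, hc0⟩ := Function.ne_iff.mp hij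
    set δ : ℝ := ∑ c, |L i c - L j c| with hδdef
    have hδ : 0 < δ := by
      have h1 : 0 < |L i c0 - L j c0| := abs_pos.mpr (sub_ne_zero.mpr hc0)
      have h2 : |L i c0 - L j c0| ≤ ∑ c, |L i c - L j c| :=
        Finset.single_le_sum (f := fun c => |L i c - L j c|)
          (fun c _ => abs_nonneg _) (Finset.mem_univ c0)
      rw [← hδdef] at h2
      linarith
    set S : ℕ → ℝ := fun n => ∑ c, |backProd M n i c - backProd M n j c| with hSdef
    have hStend : Tendsto S atTop (𝓝 δ) := by
      rw [hSdef, hδdef]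
      exact tendsto_finset_sum _ fun c _ => ((hL i c).sub (hL j c)).abs
    have hSnn : ∀ n, 0 ≤ S n := fun n =>
      Finset.sum_nonneg fun c _ => abs_nonneg _
    set g : ℕ → ℝ := fun n => (M n i j + M n j i) * S n with hgdef
    have hgnn : ∀ n, 0 ≤ g n := fun n =>
      mul_nonneg (add_nonneg (hnonneg n i j) (hnonneg n j i)) (hSnn n)
    have hgΦ : ∀ n, g n ≤ Φ n := by
      intro n
      have h1 : g n = ∑ c, (M n i j + M n j i) * |backProd M n i c - backProd M n j c| := by
        rw [hgdef, hSdef]; exact Finset.mul_sum _ _ _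
      rw [h1]
      refine Finset.sum_le_sum fun c _ => ?_
      calc (M n i j + M n j i) * |backProd M n i c - backProd M n j c|
          ≤ ∑ q, (M n i q + M n q i) * |backProd M n i c - backProd M n q c| :=
            Finset.single_le_sum
              (f := fun q => (M n i q + M n q i) * |backProd M n i c - backProd M n q c|)
              (fun q _ => mul_nonneg (add_nonneg (hnonneg n i q) (hnonneg n q i))
                (abs_nonneg _)) (Finset.mem_univ j)
        _ ≤ ∑ p, ∑ q, (M n p q + M n q p) * |backProd M n p c - backProd M n q c| :=
            Finset.single_le_sum
              (f := fun p => ∑ q, (M n p q + M n q p) * |backProd M n p c - backProd M n q c|)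
              (fun p _ => Finset.sum_nonneg fun q _ =>
                mul_nonneg (add_nonneg (hnonneg n p q) (hnonneg n q p)) (abs_nonneg _))
              (Finset.mem_univ i)
    have hgW : ∀ n, γ * g n ≤ W n - W (n+1) := by
      intro n
      have h1 : γ * g n ≤ γ * Φ n := mul_le_mul_of_nonneg_left (hgΦ n) hγ.le
      linarith [hkey n]
    have hgsum : Summable g := summable_of_telescope γ hγ W g hWnn hgnn hgW
    have hev : ∀ᶠ n in atTop, δ/2 < S n :=
      hStend.eventually (eventually_gt_nhds (by linarith))
    obtain ⟨N, hN⟩ := eventually_atTop.mp hev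
    have hsum2 : Summable fun n => M n i j + M n j i := by
      rw [← summable_nat_add_iff N]
      have hg' : Summable fun n => (2/δ) * g (n + N) :=
        ((summable_nat_add_iff N).mpr hgsum).mul_left _
      refine Summable.of_nonneg_of_le
        (fun n => add_nonneg (hnonneg _ _ _) (hnonneg _ _ _)) (fun n => ?_) hg'
      have hSn : δ/2 < S (n + N) := hN (n + N) (Nat.le_add_left N n)
      have ha : 0 ≤ M (n+N) i j + M (n+N) j i :=
        add_nonneg (hnonneg _ _ _) (hnonneg _ _ _)
      show M (n+N) i j + M (n+N) j i ≤ (2/δ) * ((M (n+N) i j + M (n+N) j i) * S (n+N))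
      calc M (n+N) i j + M (n+N) j i
          = (2/δ) * ((M (n+N) i j + M (n+N) j i) * (δ/2)) := by
            field_simp
        _ ≤ (2/δ) * ((M (n+N) i j + M (n+N) j i) * S (n+N)) := by
            apply mul_le_mul_of_nonneg_left _ (by positivity)
            exact mul_le_mul_of_nonneg_left hSn.le ha
    constructor
    · refine Summable.of_nonneg_of_le (fun n => hnonneg n i j) (fun n => ?_) hsum2
      exact le_add_of_nonneg_right (hnonneg n j i)
    · refine Summable.of_nonneg_of_le (fun n => hnonneg n j i) (fun n => ?_) hsum2
      exact le_add_of_nonneg_left (hnonneg n i j)
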